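/- Let μ ∈ ℝ, B > 0, C > 0, D ∈ ℝ, λ > 0, ℓ₀ ∈ ℝ, T > 0. The function u(t,ℓ) := exp(−(CD/B)(T−t)) · exp(−(Cλ/B)(ℓ−ℓ₀)(T−t)) · exp(−(Cλμ/(2B))(T−t)²) · exp((C²λ²/(3B))(T−t)³) is a classical solution on [0,T] × ℝ of the linear PDE u_t + μ u_ℓ + B u_{ℓℓ} − (CD/B) u − (λC/B)(ℓ−ℓ₀) u = 0 with terminal condition u(T,ℓ) = 1. -/

import Mathlib

/-- The Hopf–Cole transformed value function
`u(t,ℓ) = exp(-(CD/B)(T-t)) exp(-(Cλ/B)(ℓ-ℓ₀)(T-t)) exp(-(Cλμ/(2B))(T-t)²) exp((C²λ²/(3B))(T-t)³)`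
is a classical solution on `[0,T] × ℝ` of
`u_t + μ u_ℓ + B u_{ℓℓ} - (CD/B) u - (λC/B)(ℓ-ℓ₀) u = 0` with `u(T,·) = 1`. -/
theorem stmt_7 (μ B C D lam ℓ₀ T : ℝ) (hB : 0 < B) (hC : 0 < C) (hlam : 0 < lam)
    (hT : 0 < T) :
    let u : ℝ → ℝ → ℝ := fun t ℓ =>
      Real.exp (-(C * D / B) * (T - t)) * Real.exp (-(C * lam / B) * (ℓ - ℓ₀) * (T - t))
        * Real.exp (-(C * lam * μ / (2 * B)) * (T - t) ^ 2)
        * Real.exp (C ^ 2 * lam ^ 2 / (3 * B) * (T - t) ^ 3)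
    (∀ t ∈ Set.Icc (0:ℝ) T, ∀ ℓ : ℝ,
      deriv (fun s => u s ℓ) t + μ * deriv (fun x => u t x) ℓ
        + B * deriv (deriv (fun x => u t x)) ℓ
        - C * D / B * u t ℓ - lam * C / B * (ℓ - ℓ₀) * u t ℓ = 0) ∧
    (∀ ℓ : ℝ, u T ℓ = 1) := by
  intro u
  have hB' : B ≠ 0 := ne_of_gt hB
  -- spatial derivative
  have key : ∀ (t ℓ : ℝ), HasDerivAt (fun x => u t x)
      (-(C * lam / B) * (T - t) * u t ℓ) ℓ := by
    intro t ℓ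
    have hinner : HasDerivAt (fun x : ℝ => -(C * lam / B) * (x - ℓ₀) * (T - t))
        (-(C * lam / B) * (T - t)) ℓ := by
      have := (((hasDerivAt_id ℓ).sub_const ℓ₀).const_mul (-(C * lam / B))).mul_const (T - t)
      simpa using this
    have hexp := hinner.exp
    have h := ((hexp.const_mul (Real.exp (-(C * D / B) * (T - t)))).mul_const
        (Real.exp (-(C * lam * μ / (2 * B)) * (T - t) ^ 2))).mul_const
        (Real.exp (C ^ 2 * lam ^ 2 / (3 * B) * (T - t) ^ 3))
    refine h.congr_deriv ?_
    simp [u]; ring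
  constructor
  · intro t ht ℓ
    -- spatial derivatives
    have hd1 : deriv (fun x => u t x) = fun x => -(C * lam / B) * (T - t) * u t x :=
      funext fun x => (key t x).deriv
    have hd2 : deriv (deriv (fun x => u t x)) ℓ
        = -(C * lam / B) * (T - t) * (-(C * lam / B) * (T - t) * u t ℓ) := by
      rw [hd1]
      exact ((key t ℓ).const_mul (-(C * lam / B) * (T - t))).deriv
    -- time derivative
    have h1 : HasDerivAt (fun s : ℝ => -(C * D / B) * (T - s)) (-(C * D / B) * (-1)) t :=
      ((hasDerivAt_id t).const_sub T).const_mul _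
    have h2 : HasDerivAt (fun s : ℝ => -(C * lam / B) * (ℓ - ℓ₀) * (T - s))
        (-(C * lam / B) * (ℓ - ℓ₀) * (-1)) t :=
      ((hasDerivAt_id t).const_sub T).const_mul _
    have h3 : HasDerivAt (fun s : ℝ => -(C * lam * μ / (2 * B)) * (T - s) ^ 2)
        (-(C * lam * μ / (2 * B)) * (2 * (T - t) ^ 1 * (-1))) t :=
      (((hasDerivAt_id t).const_sub T).pow 2).const_mul _
    have h4 : HasDerivAt (fun s : ℝ => C ^ 2 * lam ^ 2 / (3 * B) * (T - s) ^ 3)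
        (C ^ 2 * lam ^ 2 / (3 * B) * (3 * (T - t) ^ 2 * (-1))) t :=
      (((hasDerivAt_id t).const_sub T).pow 3).const_mul _
    have ht1 := ((h1.exp.mul h2.exp).mul h3.exp).mul h4.exp
    have hdt : deriv (fun s => u s ℓ) t = _ := ht1.deriv
    rw [hdt, hd2, hd1]
    simp only [u, Pi.mul_apply]
    field_simp
    ring
  · intro ℓ
    simp [u]
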